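/- Let k be a field, K = k(X), and let E be a locally free sheaf of rank n on ℙ¹_k with generic stalk V = E_ξ (an n-dimensional K-vector space). For nonzero α ∈ V define deg(α) = Σ_P δ_P(α) · deg(P), where δ_P(α) is the largest m with t_P^(-m) α in the stalk E_P. Then the set {deg(α) : α ∈ V, α ≠ 0} is bounded above. -/

import Mathlib

open IsDedekindDomain
open scoped Classical

/-- The valuation attached to a place of k(X): an adic valuation for a finite
place (a height-one prime of k[X]) and the valuation at infinity. -/
noncomputable def placeValuation (k : Type*) [Field k] :
    HeightOneSpectrum (Polynomial k) ⊕ Unit →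
      Valuation (RatFunc k) (WithZero (Multiplicative ℤ))
  | Sum.inl P => P.valuation (RatFunc k)
  | Sum.inr _ => FunctionField.inftyValuation k

/-- The degree of a place of k(X). -/
noncomputable def placeDegree (k : Type*) [Field k] :
    HeightOneSpectrum (Polynomial k) ⊕ Unit → ℤ
  | Sum.inl P => Module.finrank k (Polynomial k ⧸ P.asIdeal)
  | Sum.inr _ => 1

open UniqueFactorizationMonoid

namespace Stmt11Aux

variable {k : Type*} [Field k]

/-- The normalized (monic) generator of a finite place of k(X). -/
noncomputable def pgen (P : HeightOneSpectrum (Polynomial k)) : Polynomial k :=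
  normalize (Submodule.IsPrincipal.generator P.asIdeal)

lemma span_pgen (P : HeightOneSpectrum (Polynomial k)) :
    Ideal.span {pgen P} = P.asIdeal := by
  rw [pgen, Ideal.span_singleton_eq_span_singleton.mpr (normalize_associated _),
    Ideal.span_singleton_generator]

lemma pgen_ne_zero (P : HeightOneSpectrum (Polynomial k)) : pgen P ≠ 0 := by
  intro h
  apply P.ne_bot
  rw [← span_pgen P, h, Ideal.span_singleton_eq_bot]

lemma pgen_prime (P : HeightOneSpectrum (Polynomial k)) : Prime (pgen P) :=
  (Ideal.span_singleton_prime (pgen_ne_zero P)).mp (by rw [span_pgen]; exact P.isPrime)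

lemma pgen_injective : Function.Injective (pgen (k := k)) := by
  intro P Q h
  apply HeightOneSpectrum.ext
  rw [← span_pgen P, ← span_pgen Q, h]

lemma pgen_surj {q : Polynomial k} (hq : Prime q) (hnq : normalize q = q) :
    ∃ P : HeightOneSpectrum (Polynomial k), pgen P = q := by
  refine ⟨⟨Ideal.span {q}, (Ideal.span_singleton_prime hq.ne_zero).mpr hq, ?_⟩, ?_⟩
  · simpa [Ideal.span_singleton_eq_bot] using hq.ne_zero
  · have h1 : Ideal.span {Submodule.IsPrincipal.generator (Ideal.span {q} : Ideal (Polynomial k))}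
        = Ideal.span {q} := Ideal.span_singleton_generator _
    have h2 := Ideal.span_singleton_eq_span_singleton.mp h1
    rw [pgen]
    dsimp only
    rw [normalize_eq_normalize h2.dvd h2.symm.dvd, hnq]



variable {k : Type*} [Field k]

section V

variable (v : (HeightOneSpectrum (Polynomial k) ⊕ Unit) → RatFunc k → ℤ)
  (hv : ∀ P (f : RatFunc k), f ≠ 0 → placeValuation k P f =
    ((Multiplicative.ofAdd (-(v P f)) : Multiplicative ℤ) :
      WithZero (Multiplicative ℤ)))

include hv

lemma v_mul (P) {f g : RatFunc k} (hf : f ≠ 0) (hg : g ≠ 0) :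
    v P (f * g) = v P f + v P g := by
  have h := (placeValuation k P).map_mul f g
  rw [hv _ _ (mul_ne_zero hf hg), hv _ _ hf, hv _ _ hg, ← WithZero.coe_mul,
    ← ofAdd_add, WithZero.coe_inj] at h
  have := Multiplicative.ofAdd.injective h
  linarith

lemma v_sum_ge (P) {ι : Type*} (s : Finset ι) (g : ι → RatFunc k) (m : ℤ)
    (h : ∀ i ∈ s, g i ≠ 0 → m ≤ v P (g i)) (hs : (∑ i ∈ s, g i) ≠ 0) :
    m ≤ v P (∑ i ∈ s, g i) := by
  have h1 : placeValuation k P (∑ i ∈ s, g i) ≤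
      ((Multiplicative.ofAdd (-m) : Multiplicative ℤ) : WithZero (Multiplicative ℤ)) := by
    apply Valuation.map_sum_le
    intro i hi
    by_cases hgi : g i = 0
    · simp [hgi]
    · rw [hv _ _ hgi]
      exact WithZero.coe_le_coe.mpr (Multiplicative.ofAdd_le.mpr (by linarith [h i hi hgi]))
  rw [hv _ _ hs] at h1
  have := Multiplicative.ofAdd_le.mp (WithZero.coe_le_coe.mp h1)
  linarith

lemma v_poly_inl (P : HeightOneSpectrum (Polynomial k)) {p : Polynomial k} (hp : p ≠ 0) :
    v (Sum.inl P) (algebraMap (Polynomial k) (RatFunc k) p) =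
      Multiset.count (pgen P) (normalizedFactors p) := by
  have hne : algebraMap (Polynomial k) (RatFunc k) p ≠ 0 := RatFunc.algebraMap_ne_zero hp
  have h1 := hv (Sum.inl P) _ hne
  have h2 : placeValuation k (Sum.inl P) (algebraMap (Polynomial k) (RatFunc k) p)
      = P.intValuationDef p := by
    show P.valuation (RatFunc k) _ = _
    rw [P.valuation_of_algebraMap, HeightOneSpectrum.intValuation_apply]
  rw [h2, P.intValuationDef_if_neg hp] at h1
  change ((Multiplicative.ofAdd _ : Multiplicative ℤ) : WithZero (Multiplicative ℤ)) = _ at h1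
  rw [WithZero.coe_inj] at h1
  have h3 := Multiplicative.ofAdd.injective h1
  have h4 : ((Associates.mk P.asIdeal).count (Associates.mk (Ideal.span {p})).factors : ℤ)
      = v (Sum.inl P) (algebraMap (Polynomial k) (RatFunc k) p) := by linarith
  rw [← h4]
  congr 1
  rw [count_associates_factors_eq (by simpa [Ideal.zero_eq_bot, Ideal.span_singleton_eq_bot] using hp)
    P.isPrime P.ne_bot, ← span_pgen P,
    count_span_normalizedFactors_eq hp (pgen_prime P), pgen, normalize_idem]

lemma v_poly_inr (u : Unit) {p : Polynomial k} (hp : p ≠ 0) :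
    v (Sum.inr u) (algebraMap (Polynomial k) (RatFunc k) p) = -(p.natDegree : ℤ) := by
  have hne : algebraMap (Polynomial k) (RatFunc k) p ≠ 0 := RatFunc.algebraMap_ne_zero hp
  have h1 := hv (Sum.inr u) _ hne
  have h2 : placeValuation k (Sum.inr u) (algebraMap (Polynomial k) (RatFunc k) p)
      = ((Multiplicative.ofAdd ((p.natDegree : ℤ)) : Multiplicative ℤ) :
        WithZero (Multiplicative ℤ)) := by
    show RatFunc.inftyValuation k _ = WithZero.exp _
    rw [FunctionField.inftyValuation_apply, FunctionField.inftyValuation_of_nonzero k hne,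
      RatFunc.intDegree_polynomial]
  rw [h2, WithZero.coe_inj] at h1
  have := Multiplicative.ofAdd.injective h1
  linarith

lemma finite_support_poly {p : Polynomial k} (hp : p ≠ 0) :
    {P : HeightOneSpectrum (Polynomial k) ⊕ Unit |
      v P (algebraMap (Polynomial k) (RatFunc k) p) ≠ 0}.Finite := by
  apply Set.Finite.subset (Set.Finite.union
    ((Set.Finite.preimage (Set.injOn_of_injective pgen_injective)
      (normalizedFactors p).toFinset.finite_toSet).image Sum.inl)
    (Set.finite_range (Sum.inr : Unit → _)))
  rintro (P | u) hP
  · left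
    refine ⟨P, ?_, rfl⟩
    simp only [Set.mem_preimage, Finset.coe_sort_coe, Multiset.mem_toFinset, Finset.mem_coe]
    have := v_poly_inl v hv P hp
    simp only [Set.mem_setOf_eq, this] at hP
    exact Multiset.count_ne_zero.mp (by exact_mod_cast hP)
  · right; exact ⟨u, rfl⟩

lemma finite_support {f : RatFunc k} (hf : f ≠ 0) :
    {P : HeightOneSpectrum (Polynomial k) ⊕ Unit | v P f ≠ 0}.Finite := by
  have hq : (f.denom : Polynomial k) ≠ 0 := f.denom_ne_zero
  have hp : f.num ≠ 0 := RatFunc.num_ne_zero hf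
  have hkey : ∀ P, v P f = v P (algebraMap (Polynomial k) (RatFunc k) f.num)
      - v P (algebraMap (Polynomial k) (RatFunc k) f.denom) := by
    intro P
    have hmul : f * algebraMap (Polynomial k) (RatFunc k) f.denom
        = algebraMap (Polynomial k) (RatFunc k) f.num := by
      rw [eq_comm, ← div_eq_iff (RatFunc.algebraMap_ne_zero hq)]
      exact RatFunc.num_div_denom f
    have := v_mul v hv P hf (RatFunc.algebraMap_ne_zero hq)
    rw [hmul] at this
    linarith
  apply Set.Finite.subset ((finite_support_poly v hv hp).union (finite_support_poly v hv hq))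
  intro P hP
  simp only [Set.mem_setOf_eq, Set.mem_union] at hP ⊢
  by_contra hc
  push_neg at hc
  exact hP (by rw [hkey P, hc.1, hc.2, sub_zero])

end V

lemma placeDegree_inl (P : HeightOneSpectrum (Polynomial k)) :
    placeDegree k (Sum.inl P) = ((pgen P).natDegree : ℤ) := by
  show ((Module.finrank k (Polynomial k ⧸ P.asIdeal) : ℤ)) = _
  rw [← span_pgen P]
  congr 1
  have := (AdjoinRoot.powerBasis (pgen_ne_zero P)).finrank
  rwa [AdjoinRoot.powerBasis_dim] at this

lemma one_le_placeDegree (P : HeightOneSpectrum (Polynomial k) ⊕ Unit) :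
    1 ≤ placeDegree k P := by
  rcases P with P | u
  · rw [placeDegree_inl]
    exact_mod_cast (pgen_prime P).irreducible.natDegree_pos
  · exact le_refl 1

section V2

variable (v : (HeightOneSpectrum (Polynomial k) ⊕ Unit) → RatFunc k → ℤ)
  (hv : ∀ P (f : RatFunc k), f ≠ 0 → placeValuation k P f =
    ((Multiplicative.ofAdd (-(v P f)) : Multiplicative ℤ) :
      WithZero (Multiplicative ℤ)))

omit hv in
lemma sum_natDegree_normalizedFactors {p : Polynomial k} (hp : p ≠ 0) :
    ((normalizedFactors p).map Polynomial.natDegree).sum = p.natDegree := by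
  obtain ⟨u, hu⟩ := prod_normalizedFactors hp
  conv_rhs => rw [← hu]
  rw [Polynomial.natDegree_mul (by
      intro h0
      rw [h0, zero_mul] at hu; exact hp hu.symm) (Units.ne_zero u),
    Polynomial.natDegree_eq_zero_of_isUnit u.isUnit, add_zero,
    Polynomial.natDegree_multiset_prod _ (zero_notMem_normalizedFactors p)]

include hv

lemma sum_poly {p : Polynomial k} (hp : p ≠ 0) :
    ∑ᶠ P : HeightOneSpectrum (Polynomial k) ⊕ Unit,
      v P (algebraMap (Polynomial k) (RatFunc k) p) * placeDegree k P = 0 := by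
  set g : (HeightOneSpectrum (Polynomial k) ⊕ Unit) → ℤ :=
    fun P => v P (algebraMap (Polynomial k) (RatFunc k) p) * placeDegree k P with hg
  have hsupp : Function.support g ⊆
      {P | v P (algebraMap (Polynomial k) (RatFunc k) p) ≠ 0} := by
    intro P hP hc
    exact hP (by rw [hg]; simp [hc])
  have hfin : (Function.support g).Finite :=
    (finite_support_poly v hv hp).subset hsupp
  have hsplit : ∑ᶠ P, g P = (∑ᶠ Q : HeightOneSpectrum (Polynomial k), g (Sum.inl Q))
      + ∑ᶠ u : Unit, g (Sum.inr u) := by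
    rw [← finsum_mem_univ g, ← Set.range_inl_union_range_inr,
      finsum_mem_union' (Set.isCompl_range_inl_range_inr.disjoint)
        (hfin.inter_of_right _) (hfin.inter_of_right _),
      finsum_mem_range Sum.inl_injective, finsum_mem_range Sum.inr_injective]
  have hinr : ∑ᶠ u : Unit, g (Sum.inr u) = -(p.natDegree : ℤ) := by
    rw [finsum_unique]
    show g (Sum.inr ()) = _
    rw [hg]
    show v (Sum.inr ()) _ * placeDegree k (Sum.inr ()) = _
    rw [v_poly_inr v hv () hp]
    show _ * 1 = _
    ring
  have hinl : ∑ᶠ Q : HeightOneSpectrum (Polynomial k), g (Sum.inl Q) = (p.natDegree : ℤ) := by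
    set F : Polynomial k → ℤ :=
      fun q => (Multiset.count q (normalizedFactors p) : ℤ) * (q.natDegree : ℤ) with hF
    have hgF : ∀ Q, g (Sum.inl Q) = F (pgen Q) := by
      intro Q
      rw [hg, hF]
      show v (Sum.inl Q) _ * placeDegree k (Sum.inl Q) = _
      rw [v_poly_inl v hv Q hp, placeDegree_inl]
    have hFsupp : Function.support F ⊆ Set.range pgen := by
      intro q hq
      have hmem : q ∈ normalizedFactors p := by
        by_contra hc
        exact hq (by rw [hF]; simp [Multiset.count_eq_zero_of_notMem hc])
      exact pgen_surj (prime_of_normalized_factor q hmem) (normalize_normalized_factor q hmem)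
    calc ∑ᶠ Q, g (Sum.inl Q) = ∑ᶠ Q, F (pgen Q) := by simp only [hgF]
      _ = ∑ᶠ q ∈ Set.range pgen, F q := (finsum_mem_range pgen_injective).symm
      _ = ∑ᶠ q ∈ Set.univ, F q := by
          apply finsum_mem_inter_support_eq
          rw [Set.univ_inter, Set.inter_eq_right.mpr hFsupp]
      _ = ∑ᶠ q, F q := finsum_mem_univ F
      _ = ∑ q ∈ (normalizedFactors p).toFinset, F q := by
          apply finsum_eq_finset_sum_of_support_subset
          intro q hq
          simp only [Finset.coe_sort_coe, Multiset.mem_toFinset, Finset.mem_coe]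
          by_contra hc
          exact hq (by rw [hF]; simp [Multiset.count_eq_zero_of_notMem hc])
      _ = ((normalizedFactors p).map (fun q => (q.natDegree : ℤ))).sum := by
          rw [Finset.sum_multiset_map_count]
          exact Finset.sum_congr rfl fun q _ => by rw [hF, nsmul_eq_mul]
      _ = (p.natDegree : ℤ) := by
          rw [show (fun q : Polynomial k => (q.natDegree : ℤ))
              = (fun m : ℕ => (m : ℤ)) ∘ Polynomial.natDegree from rfl,
            ← Multiset.map_map, ← Nat.cast_multiset_sum,
            sum_natDegree_normalizedFactors hp]
  rw [hsplit, hinl, hinr]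
  ring

lemma product_formula {f : RatFunc k} (hf : f ≠ 0) :
    ∑ᶠ P : HeightOneSpectrum (Polynomial k) ⊕ Unit, v P f * placeDegree k P = 0 := by
  have hq : (f.denom : Polynomial k) ≠ 0 := f.denom_ne_zero
  have hp : f.num ≠ 0 := RatFunc.num_ne_zero hf
  have hkey : ∀ P, v P f = v P (algebraMap (Polynomial k) (RatFunc k) f.num)
      - v P (algebraMap (Polynomial k) (RatFunc k) f.denom) := by
    intro P
    have hmul : f * algebraMap (Polynomial k) (RatFunc k) f.denom
        = algebraMap (Polynomial k) (RatFunc k) f.num := by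
      rw [eq_comm, ← div_eq_iff (RatFunc.algebraMap_ne_zero hq)]
      exact RatFunc.num_div_denom f
    have := v_mul v hv P hf (RatFunc.algebraMap_ne_zero hq)
    rw [hmul] at this
    linarith
  have hfin1 : (Function.support fun P =>
      v P (algebraMap (Polynomial k) (RatFunc k) f.num) * placeDegree k P).Finite := by
    apply (finite_support_poly v hv hp).subset
    intro P hP hc
    exact hP (by simp [hc])
  have hfin2 : (Function.support fun P =>
      v P (algebraMap (Polynomial k) (RatFunc k) f.denom) * placeDegree k P).Finite := by
    apply (finite_support_poly v hv hq).subset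
    intro P hP hc
    exact hP (by simp [hc])
  calc ∑ᶠ P, v P f * placeDegree k P
      = ∑ᶠ P, (v P (algebraMap (Polynomial k) (RatFunc k) f.num) * placeDegree k P
        - v P (algebraMap (Polynomial k) (RatFunc k) f.denom) * placeDegree k P) := by
        apply finsum_congr
        intro P
        rw [hkey P]
        ring
    _ = 0 := by
        rw [finsum_sub_distrib hfin1 hfin2, sum_poly v hv hp, sum_poly v hv hq, sub_zero]

end V2

end Stmt11Aux

open Stmt11Aux

set_option synthInstance.maxHeartbeats 1000000
set_option maxHeartbeats 1000000

/-- A rank-n vector bundle E on ℙ¹_k is described, via its stalks inside the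
generic stalk V = E_ξ ≅ k(X)ⁿ, by a family of lattices: for each place P of
k(X) a basis b_P of V whose O_P-span is the stalk E_P, with b_P the standard
basis for all but finitely many P.  The order of a nonzero α ∈ V at P is
δ_P(α) = max {m | t_P^(-m) α ∈ E_P} = min over the nonzero b_P-coordinates c of
α of v_P(c), and deg(α) = Σ_P δ_P(α)·deg(P).  Then {deg(α) : α ≠ 0} is bounded
above. -/
theorem stmt11 (k : Type*) [Field k] (n : ℕ) (hn : 1 ≤ n)
    (v : (HeightOneSpectrum (Polynomial k) ⊕ Unit) → RatFunc k → ℤ)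
    (hv : ∀ P (f : RatFunc k), f ≠ 0 → placeValuation k P f =
      ((Multiplicative.ofAdd (-(v P f)) : Multiplicative ℤ) :
        WithZero (Multiplicative ℤ)))
    (b : (HeightOneSpectrum (Polynomial k) ⊕ Unit) →
      Module.Basis (Fin n) (RatFunc k) (Fin n → RatFunc k))
    (hb : {P | b P ≠ Pi.basisFun (RatFunc k) (Fin n)}.Finite)
    (δ : (HeightOneSpectrum (Polynomial k) ⊕ Unit) → (Fin n → RatFunc k) → ℤ)
    (hδ : ∀ P (α : Fin n → RatFunc k), α ≠ 0 →
      IsLeast ((fun i => v P ((b P).repr α i)) '' {i | (b P).repr α i ≠ 0})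
        (δ P α)) :
    ∃ B : ℤ, ∀ α : Fin n → RatFunc k, α ≠ 0 →
      (∑ᶠ P, δ P α * placeDegree k P) ≤ B := by

  classical
  set S : Finset (HeightOneSpectrum (Polynomial k) ⊕ Unit) := hb.toFinset with hS
  have hnz : ∀ P, ((Finset.univ.filter fun ij : Fin n × Fin n => b P ij.1 ij.2 ≠ 0).image
      fun ij : Fin n × Fin n => v P (b P ij.1 ij.2)).Nonempty := by
    intro P
    have i : Fin n := ⟨0, hn⟩
    have hbne : b P i ≠ 0 := (b P).ne_zero i
    obtain ⟨j, hj⟩ := Function.ne_iff.mp hbne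
    have hj' : b P i j ≠ 0 := by simpa using hj
    exact ⟨v P (b P i j), Finset.mem_image.mpr
      ⟨(i, j), Finset.mem_filter.mpr ⟨Finset.mem_univ _, hj'⟩, rfl⟩⟩
  set m : (HeightOneSpectrum (Polynomial k) ⊕ Unit) → ℤ :=
    fun P => Finset.min' _ (hnz P) with hm
  have hmle : ∀ P (i j : Fin n), b P i j ≠ 0 → m P ≤ v P (b P i j) := by
    intro P i j hij
    exact Finset.min'_le _ _ (Finset.mem_image.mpr
      ⟨(i, j), Finset.mem_filter.mpr ⟨Finset.mem_univ _, hij⟩, rfl⟩)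
  refine ⟨∑ P ∈ S, (-(m P)) * placeDegree k P, ?_⟩
  intro α hα0
  obtain ⟨i0, hi0⟩ := Function.ne_iff.mp hα0
  have hαi0 : α i0 ≠ 0 := by simpa using hi0
  set c : (HeightOneSpectrum (Polynomial k) ⊕ Unit) → ℤ :=
    fun P => if P ∈ S then -(m P) else 0 with hc
  have claim1 : ∀ P, δ P α ≤ v P (α i0) + c P := by
    intro P
    by_cases hP : P ∈ S
    · have hsr := congrFun ((b P).sum_repr α) i0
      have heval : α i0 = ∑ i, (b P).repr α i * (b P i i0) := by
        rw [← hsr]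
        simp only [Finset.sum_apply, Pi.smul_apply, smul_eq_mul]
      have hge : δ P α + m P ≤ v P (α i0) := by
        rw [heval]
        apply v_sum_ge v hv P
        · intro i _ hterm
          have hri : (b P).repr α i ≠ 0 := fun h => hterm (by rw [h, zero_mul])
          have hbij : b P i i0 ≠ 0 := fun h => hterm (by rw [h, mul_zero])
          have h1 : δ P α ≤ v P ((b P).repr α i) := (hδ P α hα0).2 ⟨i, hri, rfl⟩
          have h2 := hmle P i i0 hbij
          rw [v_mul v hv P hri hbij]
          linarith
        · rw [← heval]; exact hαi0
      have hcP : c P = -(m P) := by rw [hc]; simp [hP]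
      linarith
    · have hbP : b P = Pi.basisFun (RatFunc k) (Fin n) := by
        by_contra hne
        exact hP (hb.mem_toFinset.mpr hne)
      have h1 : δ P α ≤ v P ((b P).repr α i0) :=
        (hδ P α hα0).2 ⟨i0, by rw [Set.mem_setOf_eq, hbP, Pi.basisFun_repr]; exact hαi0, rfl⟩
      rw [hbP, Pi.basisFun_repr] at h1
      have hcP : c P = 0 := by rw [hc]; simp [hP]
      linarith
  have hA : ∀ i : Fin n, {P : HeightOneSpectrum (Polynomial k) ⊕ Unit |
      α i ≠ 0 ∧ v P (α i) ≠ 0}.Finite := by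
    intro i
    by_cases hi : α i = 0
    · apply Set.Finite.subset Set.finite_empty
      rintro P ⟨h1, _⟩
      exact absurd hi h1
    · exact (finite_support v hv hi).subset fun P hP => hP.2
  have hδsupp : (Function.support fun P => δ P α * placeDegree k P).Finite := by
    apply Set.Finite.subset (hb.union (Set.finite_iUnion hA))
    intro P hP
    by_cases hPS : b P ≠ Pi.basisFun (RatFunc k) (Fin n)
    · exact Or.inl hPS
    · right
      push_neg at hPS
      have hδne : δ P α ≠ 0 := left_ne_zero_of_mul hP
      obtain ⟨i, hi, hvi⟩ := (hδ P α hα0).1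
      rw [Set.mem_setOf_eq, hPS, Pi.basisFun_repr] at hi
      simp only [hPS, Pi.basisFun_repr] at hvi
      exact Set.mem_iUnion.mpr ⟨i, ⟨hi, by rw [hvi]; exact hδne⟩⟩
  have hfsupp : (Function.support fun P => v P (α i0) * placeDegree k P).Finite :=
    (finite_support v hv hαi0).subset fun P hP hc0 => hP (by simp [hc0])
  set T : Finset (HeightOneSpectrum (Polynomial k) ⊕ Unit) :=
    hδsupp.toFinset ∪ hfsupp.toFinset ∪ S with hT
  have hdegnn : ∀ P : HeightOneSpectrum (Polynomial k) ⊕ Unit, 0 ≤ placeDegree k P :=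
    fun P => le_trans zero_le_one (one_le_placeDegree P)
  calc ∑ᶠ P, δ P α * placeDegree k P
      = ∑ P ∈ T, δ P α * placeDegree k P := by
        apply finsum_eq_finset_sum_of_support_subset
        intro P hP
        simp only [hT, Finset.coe_union, Set.mem_union, Finset.mem_coe]
        exact Or.inl (Or.inl (hδsupp.mem_toFinset.mpr hP))
    _ ≤ ∑ P ∈ T, (v P (α i0) + c P) * placeDegree k P :=
        Finset.sum_le_sum fun P _ =>
          mul_le_mul_of_nonneg_right (claim1 P) (hdegnn P)
    _ = ∑ P ∈ T, v P (α i0) * placeDegree k P + ∑ P ∈ T, c P * placeDegree k P := by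
        rw [← Finset.sum_add_distrib]
        exact Finset.sum_congr rfl fun P _ => by ring
    _ = 0 + ∑ P ∈ T, c P * placeDegree k P := by
        congr 1
        rw [← product_formula v hv hαi0]
        symm
        apply finsum_eq_finset_sum_of_support_subset
        intro P hP
        simp only [hT, Finset.coe_union, Set.mem_union, Finset.mem_coe]
        exact Or.inl (Or.inr (hfsupp.mem_toFinset.mpr hP))
    _ = ∑ P ∈ S, (-(m P)) * placeDegree k P := by
        rw [zero_add]
        rw [← Finset.sum_subset (show S ⊆ T by
          intro P hP
          simp only [hT, Finset.mem_union]
          exact Or.inr hP)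
          (fun P _ hPS => by rw [hc]; simp [hPS])]
        exact Finset.sum_congr rfl fun P hP => by rw [hc]; simp [hP]
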